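/- Let a and b be two distinct letters of A, let U, V be words over X ∪ A, and define Z1 = U·a·U'·U·b·U' and Z2 = V·a·V'·V·b·V'. Then for any substitution h : (X ∪ A)* → A* (a monoid homomorphism fixing every letter of A), h(Z1) = h(Z2) if and only if h(U) = h(V) and h(U') = h(V'). -/
import Mathlib

private lemma split_get {A : Type*} (x : List A) (c : A) (y : List A) (i : ℕ) :
    (x ++ c :: y)[i]? = if i < x.length then x[i]? else if i = x.length then some c else y[i - x.length - 1]? := by
  rcases lt_trichotomy i x.length with h | h | h
  · simp [List.getElem?_append_left h, h]
  · subst h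
    rw [if_neg (lt_irrefl _), if_pos rfl, List.getElem?_append_right le_rfl]
    simp
  · rw [List.getElem?_append_right (le_of_lt h), if_neg (by omega), if_neg (by omega)]
    cases hk : i - x.length with
    | zero => omega
    | succ k => simp

private lemma list_aux {A : Type*} {a b : A} (hab : a ≠ b) {u u' v v' : List A}
    (E : u ++ a :: (u' ++ (u ++ b :: u')) = v ++ a :: (v' ++ (v ++ b :: v')))
    (hlt : u.length < v.length) : False := by
  have hlen : u.length + u'.length = v.length + v'.length := by
    have := congrArg List.length E
    simp only [List.length_append, List.length_cons] at this
    omega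
  have e1 := congrArg (fun l => l[v.length]?) E
  have e2 := congrArg (fun l => l[2 * v.length + v'.length + 1]?) E
  simp only [split_get] at e1 e2
  rw [if_neg (by omega), if_neg (by omega), if_neg (by omega), if_pos trivial] at e1
  rw [List.getElem?_append_left (by omega : v.length - u.length - 1 < u'.length)] at e1
  rw [if_neg (by omega), if_neg (by omega), if_neg (by omega), if_neg (by omega)] at e2
  rw [List.getElem?_append_right (by omega : u'.length ≤ 2 * v.length + v'.length + 1 - u.length - 1),
      List.getElem?_append_right (by omega : v'.length ≤ 2 * v.length + v'.length + 1 - v.length - 1),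
      split_get, split_get] at e2
  rw [if_neg (by omega), if_neg (by omega), if_neg (by omega), if_pos (by omega)] at e2
  have hidx : 2 * v.length + v'.length + 1 - u.length - 1 - u'.length - u.length - 1
      = v.length - u.length - 1 := by omega
  rw [hidx, e1] at e2
  exact hab (Option.some.inj e2)

private lemma list_main {A : Type*} {a b : A} (hab : a ≠ b) (u u' v v' : List A) :
    u ++ a :: (u' ++ (u ++ b :: u')) = v ++ a :: (v' ++ (v ++ b :: v')) ↔
      u = v ∧ u' = v' := by
  constructor
  · intro E
    have hlu : u.length = v.length := by
      rcases lt_trichotomy u.length v.length with h | h | h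
      · exact absurd (list_aux hab E h) (fun x => x)
      · exact h
      · exact absurd (list_aux hab E.symm h) (fun x => x)
    obtain ⟨h1, h2⟩ := List.append_inj E hlu
    refine ⟨h1, ?_⟩
    have h3 := List.cons_injective h2
    have hlu' : u'.length = v'.length := by
      have := congrArg List.length E
      simp only [List.length_append, List.length_cons] at this
      omega
    exact (List.append_inj h3 hlu').1
  · rintro ⟨rfl, rfl⟩
    rfl

theorem stmt1 {A X : Type*} (a b : A) (hab : a ≠ b)
    (U V U' V' : FreeMonoid (A ⊕ X))
    (h : FreeMonoid (A ⊕ X) →* FreeMonoid A)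
    (hfix : ∀ c : A, h (FreeMonoid.of (Sum.inl c)) = FreeMonoid.of c) :
    h (U * FreeMonoid.of (Sum.inl a) * U' * U * FreeMonoid.of (Sum.inl b) * U') =
      h (V * FreeMonoid.of (Sum.inl a) * V' * V * FreeMonoid.of (Sum.inl b) * V') ↔
      (h U = h V ∧ h U' = h V') := by
  simp only [map_mul, hfix]
  constructor
  · intro E
    have E' := congrArg FreeMonoid.toList E
    simp only [FreeMonoid.toList_mul, FreeMonoid.toList_of, List.append_assoc,
      List.singleton_append] at E'
    have := (list_main hab _ _ _ _).mp E'
    exact ⟨FreeMonoid.toList.injective this.1, FreeMonoid.toList.injective this.2⟩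
  · rintro ⟨h1, h2⟩
    rw [h1, h2]
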